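/- For every real n ≥ 8, the largest real root of g(x) = x^4 - (5n - 17)x^2 - 8(2n - 9)x - 6(2n - 10) is strictly greater than sqrt(5n - 7). -/
import Mathlib


/-- For every real `n ≥ 8`, the largest real root of
`g(x) = x^4 - (5n-17) x^2 - 8(2n-9) x - 6(2n-10)` exceeds `sqrt (5n - 7)`. -/
theorem stmt_11 (n : ℝ) (hn : 8 ≤ n) (r : ℝ)
    (hr : IsGreatest {x : ℝ |
        x ^ 4 - (5 * n - 17) * x ^ 2 - 8 * (2 * n - 9) * x - 6 * (2 * n - 10) = 0} r) :
    r > Real.sqrt (5 * n - 7) := by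
  obtain ⟨hrmem, hub⟩ := hr
  set s := Real.sqrt (5 * n - 7) with hs
  have hs0 : (0:ℝ) ≤ 5 * n - 7 := by linarith
  have hssq : s ^ 2 = 5 * n - 7 := Real.sq_sqrt hs0
  have hspos : 0 < s := Real.sqrt_pos.mpr (by linarith)
  have hsle : s ≤ n := by
    have h := Real.sqrt_le_sqrt (show 5 * n - 7 ≤ n ^ 2 by nlinarith)
    rwa [Real.sqrt_sq (by linarith : (0:ℝ) ≤ n)] at h
  set g : ℝ → ℝ := fun x =>
    x ^ 4 - (5 * n - 17) * x ^ 2 - 8 * (2 * n - 9) * x - 6 * (2 * n - 10) with hg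
  have hgs : g s < 0 := by
    have h4 : s ^ 4 = (5 * n - 7) ^ 2 := by
      rw [show s ^ 4 = (s ^ 2) ^ 2 by ring, hssq]
    have key : (16 * n - 72) ^ 2 * (5 * n - 7) > (38 * n - 10) ^ 2 := by
      nlinarith [sq_nonneg (n - 8), sq_nonneg n]
    have hmul : (16 * n - 72) * s > 38 * n - 10 := by
      nlinarith [key, hssq, hspos, sq_nonneg ((16 * n - 72) * s - (38 * n - 10)),
        sq_nonneg ((16 * n - 72) * s + (38 * n - 10)), mul_pos (by linarith : (0:ℝ) < 16 * n - 72) hspos]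
    show s ^ 4 - (5 * n - 17) * s ^ 2 - 8 * (2 * n - 9) * s - 6 * (2 * n - 10) < 0
    rw [h4, hssq]; nlinarith [hmul]
  have hgn : 0 < g n := by
    show 0 < n ^ 4 - (5 * n - 17) * n ^ 2 - 8 * (2 * n - 9) * n - 6 * (2 * n - 10)
    nlinarith [sq_nonneg (n - 8), sq_nonneg n, pow_le_pow_left₀ (by norm_num : (0:ℝ) ≤ 8) hn 3]
  have hcont : ContinuousOn g (Set.Icc s n) := by
    apply Continuous.continuousOn; fun_prop
  have hmem : (0:ℝ) ∈ Set.Icc (g s) (g n) := ⟨le_of_lt hgs, le_of_lt hgn⟩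
  obtain ⟨x, hx, hgx⟩ := intermediate_value_Icc hsle hcont hmem
  have hxr : x ≤ r := hub hgx
  have hxs : s < x := lt_of_le_of_ne hx.1 fun h => by
    rw [← h] at hgx; exact (ne_of_lt hgs) hgx
  linarith
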